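/- arXiv:1903.00418 — 3 statements merged into one kernel-verified Lean document; each statement's English description precedes it below -/
import Mathlib

section
/- For every n ≥ 1, the difference between the expansion of (1/(1-z))ⁿ as a power series in z (around 0) and its expansion as a power series in z⁻¹ (around ∞) equals δ^{(n-1)}(z)/(n-1)!, where δ(z) = Σ_{m∈ℤ} z^m and δ^{(k)} denotes the k-th formal derivative. -/
open PowerSeries

/-- The formal derivative on formal distributions `Σ_m a_m z^m ∈ F[[z,z⁻¹]]`
(identified with their coefficient families `ℤ → F`): `z^m ↦ m z^{m-1}`, i.e. the
coefficient of `z^m` in the derivative is `(m+1) a_{m+1}`. -/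
def Dop {F : Type*} [Ring F] (f : ℤ → F) : ℤ → F := fun m => ((m + 1 : ℤ) : F) * f (m + 1)

lemma Dop_iter {F : Type*} [CommRing F] (k : ℕ) (m : ℤ) :
    (Dop^[k] (fun _ => (1 : F))) m = ∏ i ∈ Finset.range k, ((m + 1 + i : ℤ) : F) := by
  induction k generalizing m with
  | zero => simp
  | succ k ih =>
    rw [Function.iterate_succ_apply']
    show ((m + 1 : ℤ) : F) * (Dop^[k] (fun _ => (1 : F))) (m + 1) = _
    rw [ih, Finset.prod_range_succ']
    rw [mul_comm]
    congr 1
    · apply Finset.prod_congr rfl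
      intro i _
      congr 1
      push_cast
      ring
    · norm_num

lemma prod_asc {F : Type*} [Field F] (k a : ℕ) :
    (∏ i ∈ Finset.range k, (((a : ℤ) + 1 + i : ℤ) : F)) = ((a + 1).ascFactorial k : F) := by
  induction k with
  | zero => simp
  | succ k ih =>
    rw [Finset.prod_range_succ, ih, Nat.ascFactorial_succ]
    push_cast
    ring

lemma coeffA {F : Type*} [Field F] (k a : ℕ) :
    PowerSeries.coeff a ((PowerSeries.mk fun _ => (1 : F)) ^ (k + 1)) =
      ((k + a).choose k : F) := by
  have h : (PowerSeries.mk fun _ => (1 : F)) = PowerSeries.mk (1 : ℕ → F) := rfl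
  rw [h, PowerSeries.mk_one_pow_eq_mk_choose_add, PowerSeries.coeff_mk]

lemma coeffB {F : Type*} [Field F] (k j : ℕ) :
    PowerSeries.coeff j ((-(PowerSeries.X * PowerSeries.mk fun _ => (1 : F))) ^ (k + 1)) =
      if k + 1 ≤ j then (-1) ^ (k + 1) * ((k + (j - (k + 1))).choose k : F) else 0 := by
  rw [neg_pow, mul_pow]
  have h1 : ((-1 : F⟦X⟧) ^ (k + 1)) = PowerSeries.C ((-1 : F) ^ (k + 1)) := by
    simp
  rw [h1, ← PowerSeries.smul_eq_C_mul, map_smul, smul_eq_mul,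
    PowerSeries.coeff_X_pow_mul']
  split_ifs with h
  · rw [coeffA]
  · rw [mul_zero]

/-- For every `n ≥ 1`, the difference between the expansion of `(1/(1-z))ⁿ` around `0`
(the `n`-th power of `Σ_{m≥0} z^m ∈ F[[z]]`) and its expansion around `∞`
(the `n`-th power of `-Σ_{m≥1} z^{-m}`, i.e. of `-(w + w² + ⋯)` in the variable `w = z⁻¹`)
equals `δ^{(n-1)}(z)/(n-1)!`, where `δ(z) = Σ_{m∈ℤ} z^m`. -/
theorem stmt4 {F : Type*} [Field F] [CharZero F] (n : ℕ) (hn : 1 ≤ n) (m : ℤ) :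
    (if 0 ≤ m then
        PowerSeries.coeff m.toNat ((PowerSeries.mk fun _ => (1 : F)) ^ n)
      else 0) -
      (if m ≤ 0 then
        PowerSeries.coeff (-m).toNat
          ((-(PowerSeries.X * PowerSeries.mk fun _ => (1 : F))) ^ n)
      else 0) =
    (Dop^[n - 1] (fun _ => (1 : F))) m / (Nat.factorial (n - 1) : F) := by
  obtain ⟨k, rfl⟩ : ∃ k, n = k + 1 := ⟨n - 1, (Nat.succ_pred_eq_of_pos hn).symm⟩
  have hk : k + 1 - 1 = k := rfl
  rw [hk, Dop_iter]
  have hfac : ((Nat.factorial k : ℕ) : F) ≠ 0 := Nat.cast_ne_zero.mpr (Nat.factorial_ne_zero k)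
  rcases le_or_gt 0 m with hm | hm
  · -- m ≥ 0
    obtain ⟨a, rfl⟩ := Int.eq_ofNat_of_zero_le hm
    rw [if_pos hm, Int.toNat_natCast, coeffA]
    have hsecond : (if (a : ℤ) ≤ 0 then
        PowerSeries.coeff (-(a : ℤ)).toNat
          ((-(PowerSeries.X * PowerSeries.mk fun _ => (1 : F))) ^ (k + 1))
      else 0) = 0 := by
      split_ifs with h
      · have ha : a = 0 := by omega
        subst ha
        rw [coeffB]
        simp
      · rfl
    rw [hsecond, sub_zero]
    rw [prod_asc, Nat.ascFactorial_eq_factorial_mul_choose, eq_div_iff hfac]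
    push_cast
    ring_nf
  · -- m < 0
    rw [if_neg (not_le.mpr hm), if_pos hm.le, zero_sub]
    set j := (-m).toNat with hjdef
    have hmj : m = -(j : ℤ) := by omega
    have hj1 : 1 ≤ j := by omega
    rw [coeffB]
    rcases le_or_gt (k + 1) j with hkj | hkj
    · rw [if_pos hkj]
      have hprod : (∏ i ∈ Finset.range k, ((m + 1 + i : ℤ) : F)) =
          (-1) ^ k * ((j - 1).descFactorial k : F) := by
        have : ∀ i ∈ Finset.range k, ((m + 1 + i : ℤ) : F) = (-1) * ((j - 1 - i : ℕ) : F) := by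
          intro i hi
          rw [Finset.mem_range] at hi
          have h1 : ((j - 1 - i : ℕ) : ℤ) = (j : ℤ) - 1 - i := by omega
          have : (m + 1 + i : ℤ) = (-1) * ((j - 1 - i : ℕ) : ℤ) := by rw [h1]; omega
          rw [this]
          push_cast
          ring
        rw [Finset.prod_congr rfl this, Finset.prod_mul_distrib, Finset.prod_const,
          Nat.descFactorial_eq_prod_range, Nat.cast_prod, Finset.card_range]
      rw [hprod]
      have hc : k + (j - (k + 1)) = j - 1 := by omega
      rw [hc, Nat.descFactorial_eq_factorial_mul_choose, eq_div_iff hfac]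
      push_cast
      ring
    · rw [if_neg (not_le.mpr hkj), neg_zero]
      symm
      rw [div_eq_zero_iff]
      left
      apply Finset.prod_eq_zero (i := j - 1) (Finset.mem_range.mpr (by omega))
      have : (m + 1 + (j - 1 : ℕ) : ℤ) = 0 := by omega
      rw [this, Int.cast_zero]
end

section
/- With notation as in the previous statement, for p = 2 one has in F[[z,z⁻¹]]: (G⁺₁₀(zq²)·G⁺₁₁(zq⁻²) - G⁻₁₀(z⁻¹q⁻²)·G⁻₁₁(z⁻¹q²))/(q-q⁻¹)² = [2]_q² · (δ(z) - δ'(z)), where δ'(z) = Σ_{m∈ℤ} m·z^{m-1} is the formal derivative of δ. -/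
open PowerSeries

/-- The quantum integer `[n]_q = (qⁿ - q⁻ⁿ)/(q - q⁻¹)` in `F = K(q)`, `q = X`. -/
noncomputable def qnum (K : Type*) [Field K] (n : ℤ) : RatFunc K :=
  ((RatFunc.X : RatFunc K) ^ n - (RatFunc.X : RatFunc K) ^ (-n)) /
    ((RatFunc.X : RatFunc K) - (RatFunc.X : RatFunc K)⁻¹)

/-- The power series `G⁺` attached to a Cartan integer `c`, i.e. the expansion of
`(zq^{-c}-1)/(z - q^{-c})` at `z = 0`; the expansion `G⁻` at `∞` (in the variable `z⁻¹`)
is `Gser K (-c)`.  In type `ȧ₁`, `G^±₁₀ = Gser K (∓2)` and `G^±₁₁ = Gser K (±2)`. -/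
noncomputable def Gser (K : Type*) [Field K] (c : ℤ) : PowerSeries (RatFunc K) :=
  PowerSeries.mk fun m =>
    if m = 0 then (RatFunc.X : RatFunc K) ^ c
    else ((RatFunc.X : RatFunc K) - (RatFunc.X : RatFunc K)⁻¹) * qnum K c *
      (RatFunc.X : RatFunc K) ^ (c * (m : ℤ))



lemma hs_ne {K : Type*} [Field K] :
    (RatFunc.X : RatFunc K) - (RatFunc.X : RatFunc K)⁻¹ ≠ 0 := by
  intro h
  have h2 : (RatFunc.X : RatFunc K) * (RatFunc.X - RatFunc.X⁻¹) = RatFunc.X ^ 2 - 1 := by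
    rw [mul_sub, mul_inv_cancel₀ (RatFunc.X_ne_zero)]; ring
  rw [h, mul_zero] at h2
  have h3 : (RatFunc.X : RatFunc K) ^ 2 = 1 := by linear_combination -h2
  have h4 : ((Polynomial.X : Polynomial K) ^ 2) = 1 := by
    apply RatFunc.algebraMap_injective K
    push_cast
    simp [RatFunc.algebraMap_X, h3]
  have := congrArg Polynomial.natDegree h4
  simp at this

lemma s_mul_qnum {K : Type*} [Field K] (c : ℤ) :
    ((RatFunc.X : RatFunc K) - (RatFunc.X : RatFunc K)⁻¹) * qnum K c =
      (RatFunc.X : RatFunc K) ^ c - (RatFunc.X : RatFunc K) ^ (-c) := by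
  rw [qnum, mul_div_cancel₀ _ hs_ne]

-- rescaled coefficient lemmas
lemma coeffA_s16 {K : Type*} [Field K] (i : ℕ) :
    PowerSeries.coeff (R := RatFunc K) i
      (PowerSeries.rescale ((RatFunc.X : RatFunc K) ^ (2 : ℤ)) (Gser K (-2))) =
    if i = 0 then (RatFunc.X : RatFunc K) ^ (-2 : ℤ)
    else -((RatFunc.X : RatFunc K) ^ (2:ℤ) - (RatFunc.X : RatFunc K) ^ (-2:ℤ)) := by
  rw [PowerSeries.coeff_rescale, Gser, PowerSeries.coeff_mk]
  by_cases hi : i = 0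
  · simp [hi]
  · rw [if_neg hi, if_neg hi, s_mul_qnum]
    have hX : (RatFunc.X : RatFunc K) ≠ 0 := RatFunc.X_ne_zero
    rw [← zpow_natCast ((RatFunc.X : RatFunc K) ^ (2:ℤ)) i, ← zpow_mul]
    simp only [neg_neg, show ((-2):ℤ) = -(2:ℤ) from rfl,
      show (-(2:ℤ)) * (i:ℤ) = -(2 * (i:ℤ)) from by ring, zpow_neg]
    have key : (RatFunc.X : RatFunc K) ^ (2*(i:ℤ)) * ((RatFunc.X : RatFunc K) ^ (2*(i:ℤ)))⁻¹ = 1 :=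
      mul_inv_cancel₀ (zpow_ne_zero _ hX)
    linear_combination (((RatFunc.X : RatFunc K) ^ (2:ℤ))⁻¹ - (RatFunc.X : RatFunc K) ^ (2:ℤ)) * key

lemma coeffB_s16 {K : Type*} [Field K] (j : ℕ) :
    PowerSeries.coeff (R := RatFunc K) j
      (PowerSeries.rescale ((RatFunc.X : RatFunc K) ^ (-2 : ℤ)) (Gser K 2)) =
    if j = 0 then (RatFunc.X : RatFunc K) ^ (2 : ℤ)
    else ((RatFunc.X : RatFunc K) ^ (2:ℤ) - (RatFunc.X : RatFunc K) ^ (-2:ℤ)) := by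
  rw [PowerSeries.coeff_rescale, Gser, PowerSeries.coeff_mk]
  by_cases hj : j = 0
  · simp [hj]
  · rw [if_neg hj, if_neg hj, s_mul_qnum]
    have hX : (RatFunc.X : RatFunc K) ≠ 0 := RatFunc.X_ne_zero
    rw [← zpow_natCast ((RatFunc.X : RatFunc K) ^ (-2:ℤ)) j, ← zpow_mul]
    simp only [show ((-2):ℤ) = -(2:ℤ) from rfl,
      show (-(2:ℤ)) * (j:ℤ) = -(2 * (j:ℤ)) from by ring, zpow_neg]
    have key : (RatFunc.X : RatFunc K) ^ (2*(j:ℤ)) * ((RatFunc.X : RatFunc K) ^ (2*(j:ℤ)))⁻¹ = 1 :=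
      mul_inv_cancel₀ (zpow_ne_zero _ hX)
    linear_combination ((RatFunc.X : RatFunc K) ^ (2:ℤ) - ((RatFunc.X : RatFunc K) ^ (2:ℤ))⁻¹) * key

lemma coeffProd {K : Type*} [Field K] (n : ℕ) (hn : n ≠ 0) :
    PowerSeries.coeff (R := RatFunc K) n
      (PowerSeries.rescale ((RatFunc.X : RatFunc K) ^ (2 : ℤ)) (Gser K (-2)) *
        PowerSeries.rescale ((RatFunc.X : RatFunc K) ^ (-2 : ℤ)) (Gser K 2)) =
    -(n : RatFunc K) *
      ((RatFunc.X : RatFunc K) ^ (2:ℤ) - (RatFunc.X : RatFunc K) ^ (-2:ℤ))^2 := by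
  set a : RatFunc K := (RatFunc.X : RatFunc K) ^ (2:ℤ) with ha
  set b : RatFunc K := (RatFunc.X : RatFunc K) ^ (-2:ℤ) with hb
  rw [PowerSeries.coeff_mul, Finset.Nat.sum_antidiagonal_eq_sum_range_succ_mk]
  have step : ∀ i ∈ Finset.range (n+1),
      (PowerSeries.coeff (R := RatFunc K) i
          (PowerSeries.rescale ((RatFunc.X : RatFunc K) ^ (2 : ℤ)) (Gser K (-2)))) *
        (PowerSeries.coeff (R := RatFunc K) (n-i)
          (PowerSeries.rescale ((RatFunc.X : RatFunc K) ^ (-2 : ℤ)) (Gser K 2))) =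
      (-(a-b))*(a-b) + (if i = 0 then b*(a-b) - (-(a-b))*(a-b) else 0)
        + (if i = n then (-(a-b))*a - (-(a-b))*(a-b) else 0) := by
    intro i hi
    rw [coeffA_s16, coeffB_s16]
    rw [Finset.mem_range] at hi
    rcases eq_or_ne i 0 with h0 | h0
    · subst h0
      simp only [Nat.sub_zero, eq_self_iff_true, if_true, if_neg hn, if_neg (Ne.symm hn)]
      ring
    · rcases eq_or_ne i n with h1 | h1
      · subst h1
        rw [if_neg h0, if_neg h0, if_pos rfl, Nat.sub_self, if_pos rfl]
        ring
      · have h2 : n - i ≠ 0 := by omega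
        rw [if_neg h0, if_neg h0, if_neg h1, if_neg h2]
        ring
  rw [Finset.sum_congr rfl step, Finset.sum_add_distrib, Finset.sum_add_distrib,
    Finset.sum_const, Finset.sum_ite_eq', Finset.sum_ite_eq',
    if_pos (Finset.self_mem_range_succ n), if_pos (by simp : 0 ∈ Finset.range (n+1))]
  simp only [Finset.card_range, nsmul_eq_mul]
  push_cast
  ring

/-- Proposition A.5.i of the paper, case `p = 2`.  In `F[[z,z⁻¹]]`:
`(G⁺₁₀(zq²)·G⁺₁₁(zq⁻²) - G⁻₁₀(z⁻¹q⁻²)·G⁻₁₁(z⁻¹q²))/(q-q⁻¹)² = [2]_q²·(δ(z) - δ'(z))`,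
stated coefficientwise: the coefficient of `z^m` in `δ(z)` is `1` and in
`δ'(z) = Σ_{m∈ℤ} m z^{m-1}` it is `m+1`. -/
theorem stmt16 {K : Type*} [Field K] [CharZero K] (m : ℤ) :
    ((if 0 ≤ m then
        PowerSeries.coeff (R := RatFunc K) m.toNat
          (PowerSeries.rescale ((RatFunc.X : RatFunc K) ^ (2 : ℤ)) (Gser K (-2)) *
            PowerSeries.rescale ((RatFunc.X : RatFunc K) ^ (-2 : ℤ)) (Gser K 2))
      else 0) -
      (if m ≤ 0 then
        PowerSeries.coeff (R := RatFunc K) (-m).toNat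
          (PowerSeries.rescale ((RatFunc.X : RatFunc K) ^ (-2 : ℤ)) (Gser K 2) *
            PowerSeries.rescale ((RatFunc.X : RatFunc K) ^ (2 : ℤ)) (Gser K (-2)))
      else 0)) /
      ((RatFunc.X : RatFunc K) - (RatFunc.X : RatFunc K)⁻¹) ^ 2 =
    qnum K 2 ^ 2 * ((1 : RatFunc K) - ((m + 1 : ℤ) : RatFunc K)) := by
  have hq2 : qnum K 2 = ((RatFunc.X : RatFunc K) ^ (2:ℤ) - (RatFunc.X : RatFunc K) ^ (-2:ℤ)) /
      ((RatFunc.X : RatFunc K) - (RatFunc.X : RatFunc K)⁻¹) := rfl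
  have hs : ((RatFunc.X : RatFunc K) - (RatFunc.X : RatFunc K)⁻¹) ≠ 0 := hs_ne
  rw [mul_comm (PowerSeries.rescale ((RatFunc.X : RatFunc K) ^ (-2 : ℤ)) (Gser K 2)) _]
  rcases lt_trichotomy m 0 with hm | hm | hm
  · rw [if_neg (by omega), if_pos (by omega), coeffProd _ (by omega)]
    have hcast : (((-m).toNat : RatFunc K)) = ((-m : ℤ) : RatFunc K) := by
      rw [← Int.cast_natCast, Int.toNat_of_nonneg (by omega)]
    rw [hcast, hq2]
    push_cast
    field_simp [RatFunc.X_ne_zero]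
    ring
  · subst hm
    norm_num
  · rw [if_pos (by omega), if_neg (by omega), coeffProd _ (by omega)]
    have hcast : ((m.toNat : RatFunc K)) = ((m : ℤ) : RatFunc K) := by
      rw [← Int.cast_natCast, Int.toNat_of_nonneg (by omega)]
    rw [hcast, hq2]
    push_cast
    field_simp [RatFunc.X_ne_zero]
    ring
end

section
/- With notation as above, one has in F[[z,z⁻¹]]: (G⁺₁₁(zq⁻²)² - G⁻₁₁(z⁻¹q²)²)/(q-q⁻¹)² = (2q⁻²[2]_q/(q-q⁻¹))·δ(z) + [2]_q²·δ'(z). -/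
open PowerSeries

lemma geom_sq_coeff (R : Type*) [CommRing R] (n : ℕ) :
    PowerSeries.coeff n ((PowerSeries.mk fun _ => (1:R)) ^ 2) = (n + 1 : R) := by
  rw [sq, PowerSeries.coeff_mul]
  simp [Finset.Nat.card_antidiagonal]

lemma mk_if_eq (R : Type*) [CommRing R] (c0 a : R) :
    (PowerSeries.mk fun k => if k = 0 then c0 else a)
      = PowerSeries.C (c0 - a) + PowerSeries.C a * PowerSeries.mk fun _ => (1:R) := by
  ext n
  simp only [coeff_mk, map_add, coeff_C, coeff_C_mul, mul_one]
  split <;> ring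

lemma sq_coeff (R : Type*) [CommRing R] (c0 a : R) (n : ℕ) :
    PowerSeries.coeff n ((PowerSeries.mk fun k => if k = 0 then c0 else a) ^ 2)
      = (if n = 0 then (c0 - a) ^ 2 else 0) + 2 * (c0 - a) * a + a ^ 2 * (n + 1) := by
  rw [mk_if_eq]
  rw [show (C (c0-a) + C a * (PowerSeries.mk fun _ => (1:R))) ^ 2
      = C ((c0-a)^2) + C (2*(c0-a)*a) * (PowerSeries.mk fun _ => (1:R))
        + C (a^2) * (PowerSeries.mk fun _ => (1:R)) ^ 2 by
    simp only [map_pow, map_mul, map_sub, map_add, map_ofNat]; ring]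
  simp only [map_add, coeff_C_mul, coeff_C, coeff_mk, mul_one, geom_sq_coeff]

lemma rescale_Gser (K : Type*) [Field K] (c : ℤ) :
    PowerSeries.rescale ((RatFunc.X : RatFunc K) ^ (-c)) (Gser K c)
      = PowerSeries.mk fun k => if k = 0 then (RatFunc.X : RatFunc K) ^ c
          else ((RatFunc.X : RatFunc K) - (RatFunc.X : RatFunc K)⁻¹) * qnum K c := by
  have hX : (RatFunc.X : RatFunc K) ≠ 0 := RatFunc.X_ne_zero
  ext n
  rw [coeff_rescale]
  simp only [Gser, coeff_mk]
  by_cases hn : n = 0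
  · simp [hn]
  · simp only [hn, if_false]
    have h1 : ((RatFunc.X : RatFunc K) ^ (-c)) ^ n * (RatFunc.X : RatFunc K) ^ (c * (n:ℤ)) = 1 := by
      rw [← zpow_natCast ((RatFunc.X : RatFunc K) ^ (-c)) n, ← zpow_mul, ← zpow_add₀ hX]
      ring_nf
      exact zpow_zero _
    rw [mul_comm (((RatFunc.X : RatFunc K) - (RatFunc.X : RatFunc K)⁻¹) * qnum K c) _,
      ← mul_assoc, h1, one_mul]

lemma d_ne_zero (K : Type*) [Field K] :
    (RatFunc.X : RatFunc K) - (RatFunc.X : RatFunc K)⁻¹ ≠ 0 := by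
  have hX : (RatFunc.X : RatFunc K) ≠ 0 := RatFunc.X_ne_zero
  have hpoly : (Polynomial.X ^ 2 - 1 : Polynomial K) ≠ 0 := by
    intro h
    have := congrArg (fun p => Polynomial.coeff p 2) h
    simp [Polynomial.coeff_one] at this
  have h2 : (RatFunc.X : RatFunc K) ^ 2 - 1 ≠ 0 := by
    have := RatFunc.algebraMap_ne_zero (K := K) hpoly
    simpa [map_sub, map_pow, RatFunc.algebraMap_X] using this
  intro h
  apply h2
  have hx : (RatFunc.X : RatFunc K) = (RatFunc.X : RatFunc K)⁻¹ := sub_eq_zero.mp h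
  calc (RatFunc.X : RatFunc K) ^ 2 - 1
      = RatFunc.X * RatFunc.X - 1 := by ring
    _ = RatFunc.X * (RatFunc.X)⁻¹ - 1 := by rw [← hx]
    _ = 0 := by rw [mul_inv_cancel₀ hX]; ring


/-- Proposition A.5.ii of the paper.  In `F[[z,z⁻¹]]`:
`(G⁺₁₁(zq⁻²)² - G⁻₁₁(z⁻¹q²)²)/(q-q⁻¹)² = (2q⁻²[2]_q/(q-q⁻¹))·δ(z) + [2]_q²·δ'(z)`,
stated coefficientwise: the coefficient of `z^m` in `δ(z)` is `1` and in `δ'(z)` it is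
`m+1`; the squares are taken in `F[[z]]` resp. `F[[z⁻¹]]`. -/
theorem stmt17 {K : Type*} [Field K] [CharZero K] (m : ℤ) :
    ((if 0 ≤ m then
        PowerSeries.coeff m.toNat
          ((PowerSeries.rescale ((RatFunc.X : RatFunc K) ^ (-2 : ℤ)) (Gser K 2)) ^ 2)
      else 0) -
      (if m ≤ 0 then
        PowerSeries.coeff (-m).toNat
          ((PowerSeries.rescale ((RatFunc.X : RatFunc K) ^ (2 : ℤ)) (Gser K (-2))) ^ 2)
      else 0)) /
      ((RatFunc.X : RatFunc K) - (RatFunc.X : RatFunc K)⁻¹) ^ 2 =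
    2 * (RatFunc.X : RatFunc K) ^ (-2 : ℤ) * qnum K 2 /
        ((RatFunc.X : RatFunc K) - (RatFunc.X : RatFunc K)⁻¹) +
      qnum K 2 ^ 2 * ((m + 1 : ℤ) : RatFunc K) := by
  have hX : (RatFunc.X : RatFunc K) ≠ 0 := RatFunc.X_ne_zero
  have hd := d_ne_zero K
  have hres1 : PowerSeries.rescale ((RatFunc.X : RatFunc K) ^ (-2 : ℤ)) (Gser K 2)
      = PowerSeries.mk fun k => if k = 0 then (RatFunc.X : RatFunc K) ^ (2:ℤ)
          else ((RatFunc.X : RatFunc K) - (RatFunc.X : RatFunc K)⁻¹) * qnum K 2 :=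
    rescale_Gser K 2
  have hres2 : PowerSeries.rescale ((RatFunc.X : RatFunc K) ^ (2 : ℤ)) (Gser K (-2))
      = PowerSeries.mk fun k => if k = 0 then (RatFunc.X : RatFunc K) ^ (-2:ℤ)
          else ((RatFunc.X : RatFunc K) - (RatFunc.X : RatFunc K)⁻¹) * qnum K (-2) := by
    have := rescale_Gser K (-2)
    rwa [neg_neg] at this
  have e1 : (RatFunc.X : RatFunc K) ^ (2:ℤ) = RatFunc.X * RatFunc.X := by
    rw [show (2:ℤ) = ((2:ℕ):ℤ) by norm_num, zpow_natCast]; ring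
  have e2 : (RatFunc.X : RatFunc K) ^ (-2:ℤ)
      = (RatFunc.X : RatFunc K)⁻¹ * (RatFunc.X : RatFunc K)⁻¹ := by
    rw [zpow_neg, e1, mul_inv]
  have hQ : qnum K 2 = (RatFunc.X : RatFunc K) + (RatFunc.X : RatFunc K)⁻¹ := by
    rw [qnum, e1]
    rw [show -(2:ℤ) = (-2:ℤ) by norm_num, e2, div_eq_iff hd]
    ring
  have hqneg : qnum K (-2) = - qnum K 2 := by
    rw [qnum, qnum, neg_neg, ← neg_div]
    ring_nf
  rcases lt_trichotomy m 0 with hm | hm | hm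
  · -- m < 0
    rw [if_neg (not_le.mpr hm), if_pos hm.le, hres2, sq_coeff]
    have hnz : (-m).toNat ≠ 0 := by omega
    rw [if_neg hnz]
    have hcast : (((-m).toNat : ℕ) : RatFunc K) = ((-m : ℤ) : RatFunc K) := by
      rw [← Int.cast_natCast, Int.toNat_of_nonneg (by omega)]
    rw [hcast, hqneg, hQ, e2, div_add' _ _ _ hd,
      div_eq_div_iff (pow_ne_zero 2 hd) hd]
    push_cast
    ring
  · -- m = 0
    subst hm
    rw [if_pos le_rfl, if_pos le_rfl, hres1, hres2, sq_coeff, sq_coeff]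
    simp only [Int.toNat_zero, Nat.cast_zero, if_pos rfl, neg_zero]
    rw [hqneg, hQ, e1, e2, div_add' _ _ _ hd,
      div_eq_div_iff (pow_ne_zero 2 hd) hd]
    push_cast
    ring
  · -- m > 0
    rw [if_pos hm.le, if_neg (not_le.mpr hm), hres1, sq_coeff]
    have hnz : m.toNat ≠ 0 := by omega
    rw [if_neg hnz]
    have hcast : ((m.toNat : ℕ) : RatFunc K) = ((m : ℤ) : RatFunc K) := by
      rw [← Int.cast_natCast, Int.toNat_of_nonneg hm.le]
    rw [hcast, hQ, e1, e2, div_add' _ _ _ hd,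
      div_eq_div_iff (pow_ne_zero 2 hd) hd]
    push_cast
    ring
end
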